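/- With ω, ∇, Ω, R̃ as in the context: b((ω)₀) = 0, and for every k ≥ 1, b((ω)_k) = ℏ ∇((ω)_{k−1}) + ℏ Σ_{j=1}^{k−1} (−1)^j · 1 ⊗ ω ⊗ ⋯ ⊗ (Ω − R̃) ⊗ ⋯ ⊗ ω, where Ω − R̃ occupies the j-th of the ω-slots, and ∇ acts on tensors by the graded Leibniz rule ∇(c₀ ⊗ ⋯ ⊗ c_m) = Σ_{i=0}^{m} (−1)^{deg c₀ + ⋯ + deg c_{i−1}} c₀ ⊗ ⋯ ⊗ ∇cᵢ ⊗ ⋯ ⊗ c_m. -/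

import Mathlib

noncomputable section

/-- `(-1)^z` (for `z : ℤ`) as an element of `K`. -/
def negOnePowK (K : Type*) [CommRing K] (z : ℤ) : K := ((Int.negOnePow z : ℤ) : K)

/-- merge slots `i` and `i+1` of a tuple, using the binary operation `op`
(used with `op = (*)` on algebra elements and with `op = (+)` on degrees). -/
def mergeW {α : Type*} (op : α → α → α) {N : ℕ} (v : Fin (N+1) → α) (i : Fin N) :
    Fin N → α := fun j =>
  if j.1 < i.1 then v ⟨j.1, by have := j.2; omega⟩
  else if j.1 = i.1 then op (v ⟨i.1, by have := i.2; omega⟩) (v ⟨i.1+1, by have := i.2; omega⟩)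
  else v ⟨j.1+1, by have := j.2; omega⟩

/-- the rotated tuple `(op v_N v₀, v₁, …, v_{N-1})`. -/
def rotW {α : Type*} (op : α → α → α) {N : ℕ} (v : Fin (N+1) → α) : Fin N → α := fun j =>
  if j.1 = 0 then op (v ⟨N, by omega⟩) (v ⟨0, by omega⟩)
  else v ⟨j.1, by have := j.2; omega⟩

/-- `(p,q)`-shuffles: permutations `σ` of `{0,…,p+q-1}` such that the positions of the
entries of the first block (values `< p`) occur in increasing order, and likewise for
the second block (values `≥ p`); position `i` of the shuffled word carries entry `σ(i)`. -/
def IsShuffle (p q : ℕ) (σ : Equiv.Perm (Fin (p+q))) : Prop :=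
  (∀ s t : Fin (p+q), s < t → t.1 < p → σ⁻¹ s < σ⁻¹ t) ∧
  (∀ s t : Fin (p+q), s < t → p ≤ s.1 → σ⁻¹ s < σ⁻¹ t)

noncomputable instance (p q : ℕ) (σ : Equiv.Perm (Fin (p+q))) : Decidable (IsShuffle p q σ) :=
  Classical.dec _

/-- the `σ`-shuffled tuple `c₀ ⊗ x_{σ(1)}… / y_{σ(1)-p}…` with head `c₀` entering the
shuffle product `(x₀ ⊗ ⋯ ⊗ x_p) × (y₀ ⊗ ⋯ ⊗ y_q)`; the entries `x₁,…,x_p,y₁,…,y_q`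
are distributed according to `σ`. -/
def shufT {α : Type*} (p q : ℕ) (c0 : α) (x : Fin (p+1) → α) (y : Fin (q+1) → α)
    (σ : Equiv.Perm (Fin (p+q))) : Fin (p+q+1) → α := fun j =>
  Fin.cases c0 (fun i =>
    if hlt : (σ i).1 < p then x ⟨(σ i).1 + 1, by omega⟩
    else y ⟨(σ i).1 - p + 1, by have := (σ i).2; omega⟩) j

/-- the graded Hochschild boundary of a pure tensor `v` with degree data `d`:
`b(v₀⊗⋯⊗v_N) = Σ_{j<N} (-1)^j v₀⊗⋯⊗v_jv_{j+1}⊗⋯ +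
 (-1)^N (-1)^{deg v_N (deg v₀+⋯+deg v_{N-1})} v_Nv₀⊗v₁⊗⋯⊗v_{N-1}`. -/
def bPure (K : Type*) [CommRing K] (A : Type*) [Ring A] [Algebra K A] {N : ℕ}
    (v : Fin (N+1) → A) (d : Fin (N+1) → ℤ) :
    PiTensorProduct K (fun _ : Fin N => A) :=
  (∑ j : Fin N, (-1:K)^(j.1) • PiTensorProduct.tprod K (mergeW (· * ·) v j))
  + ((-1:K)^N * negOnePowK K (d (Fin.last N) * ∑ j : Fin N, d j.castSucc)) •
      PiTensorProduct.tprod K (rotW (· * ·) v)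

/-- the shuffle product of the homogeneous pure chains `x` (degrees `dx`) and `y`
(degrees `dy`):
`x × y = (-1)^{deg y₀ (deg x₁+⋯+deg x_p)} Σ_{(p,q)-shuffles σ} sgn(σ) (x₀y₀) ⊗ (shuffled)`,
realized inside the tensor power of length `N = p+q+1`. -/
def shufProd (K : Type*) [CommRing K] (A : Type*) [Ring A] [Algebra K A]
    (p q N : ℕ) (hN : N = p + q + 1)
    (x : Fin (p+1) → A) (dx : Fin (p+1) → ℤ) (y : Fin (q+1) → A) (dy : Fin (q+1) → ℤ) :
    PiTensorProduct K (fun _ : Fin N => A) :=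
  negOnePowK K (dy 0 * ∑ j : Fin p, dx j.succ) •
    ∑ σ : Equiv.Perm (Fin (p+q)),
      if IsShuffle p q σ then
        (((Equiv.Perm.sign σ : ℤˣ) : ℤ) : K) •
          PiTensorProduct.tprod K
            (fun j : Fin N => shufT p q (x 0 * y 0) x y σ (Fin.cast (by omega) j))
      else 0

/-- `(ω)_k = 1 ⊗ ω ⊗ ⋯ ⊗ ω` (k copies of ω). -/
def omegaT {A : Type*} [One A] (ω : A) (k : ℕ) : Fin (k+1) → A :=
  fun j => if j.1 = 0 then 1 else ω

/-- the degrees of `(ω)_k` (ω has degree 1, the unit degree 0). -/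
def omegaD (k : ℕ) : Fin (k+1) → ℤ := fun j => if j.1 = 0 then 0 else 1


lemma negOnePowK_natCast (K : Type*) [CommRing K] (n : ℕ) :
    negOnePowK K (n : ℤ) = (-1 : K)^n := by
  induction n with
  | zero => simp [negOnePowK]
  | succ n ih =>
      have : ((n : ℤ) + 1) = ((n+1 : ℕ) : ℤ) := by push_cast; ring
      rw [negOnePowK, ← this, Int.negOnePow_succ]
      push_cast
      rw [pow_succ]
      rw [negOnePowK] at ih
      rw [ih]; ring

/-- With `∇ω + ω²/ℏ = Ω - R̃` as in the generalized Maurer–Cartan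
setting: `b((ω)₀) = 0` (trivially, as the degree-0 differential lands in `C₋₁ = 0`),
and for every `k ≥ 1`:
`b((ω)_k) = ℏ ∇((ω)_{k-1}) + ℏ Σ_{j=1}^{k-1} (-1)^j 1⊗ω⊗⋯⊗(Ω-R̃)⊗⋯⊗ω`,
where `Ω - R̃` occupies the `j`-th ω-slot and `∇` acts on tensors by the graded
Leibniz rule. -/
theorem b_omega_powers
    (K : Type*) [CommRing K] (A : Type*) [Ring A] [Algebra K A]
    (𝒜 : ℤ → Submodule K A) [GradedRing 𝒜]
    (hbar hbarInv : K) (hunit : hbar * hbarInv = 1)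
    (nabla : A →ₗ[K] A)
    (hdeg : ∀ (d : ℤ) (x : A), x ∈ 𝒜 d → nabla x ∈ 𝒜 (d+1))
    (hleibniz : ∀ (dx : ℤ) (x y : A), x ∈ 𝒜 dx →
      nabla (x * y) = nabla x * y + negOnePowK K dx • (x * nabla y))
    (ω : A) (hω : ω ∈ 𝒜 1) (Rt : A) (hRt : Rt ∈ 𝒜 2) (Om : A) (hOm : Om ∈ 𝒜 2)
    (hcentral : ∀ x : A, Om * x = x * Om)
    (hMC : nabla ω + hbarInv • (ω * ω) = Om - Rt) :
    (∀ f : PiTensorProduct K (fun _ : Fin 1 => A) →ₗ[K] (⊥ : Submodule K A),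
        f (PiTensorProduct.tprod K (omegaT ω 0)) = 0)
    ∧ ∀ k : ℕ,
        bPure K A (omegaT ω (k+1)) (omegaD (k+1)) =
          hbar •
            ((∑ i : Fin (k+1),
                negOnePowK K (∑ j : Fin (k+1), if j < i then omegaD k j else 0) •
                  PiTensorProduct.tprod K
                    (Function.update (omegaT ω k) i (nabla (omegaT ω k i))))
              + ∑ j : Fin k, (-1:K)^(j.1+1) •
                  PiTensorProduct.tprod K
                    (Function.update (omegaT ω k)
                      (⟨j.1+1, by have := j.2; omega⟩ : Fin (k+1)) (Om - Rt))) := by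
  constructor
  · intro f
    exact Subtype.ext ((Submodule.mem_bot K).mp (f _).2)
  · intro k
    have hone : (1 : A) ∈ 𝒜 0 := SetLike.one_mem_graded 𝒜
    have hnabla1 : nabla (1 : A) = 0 := by
      have h := hleibniz 0 1 1 hone
      simp only [negOnePowK, Int.negOnePow_zero, Units.val_one, Int.cast_one, one_smul,
        one_mul, mul_one] at h
      exact right_eq_add.mp h
    -- the common middle form
    set v : Fin (k+1) → A := omegaT ω k with hv
    have hL : bPure K A (omegaT ω (k+1)) (omegaD (k+1)) =
        ∑ j : Fin k, (-1:K)^(j.1+1) •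
          PiTensorProduct.tprod K (Function.update v j.succ (ω*ω)) := by
      rw [bPure]
      have hdl : omegaD (k+1) (Fin.last (k+1)) = 1 := by
        simp [omegaD, Fin.last]
      have hds : (∑ j : Fin (k+1), omegaD (k+1) j.castSucc) = (k : ℤ) := by
        rw [Fin.sum_univ_succ]
        simp [omegaD, Fin.ext_iff]
      rw [hdl, hds, one_mul, negOnePowK_natCast]
      have hcoef : ((-1:K)^(k+1) * (-1:K)^k) = -1 := by
        rw [← pow_add]
        have : k + 1 + k = 2*k + 1 := by omega
        rw [this, pow_succ, pow_mul]
        norm_num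
      rw [hcoef]
      rw [Fin.sum_univ_succ]
      have h0 : mergeW (· * ·) (omegaT ω (k+1)) 0 = rotW (· * ·) (omegaT ω (k+1)) := by
        funext l
        rcases Nat.eq_zero_or_pos l.1 with h | h
        · simp [mergeW, rotW, omegaT, h]
        · have h' : l.1 ≠ 0 := by omega
          simp [mergeW, rotW, omegaT, h']
      have hmerge : ∀ j : Fin k, mergeW (· * ·) (omegaT ω (k+1)) j.succ =
          Function.update v j.succ (ω*ω) := by
        intro j
        funext l
        rcases lt_trichotomy l.1 (j.1+1) with h | h | h
        · rw [Function.update_of_ne (by simp [Fin.ext_iff, Fin.val_succ]; omega)]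
          simp only [mergeW, Fin.val_succ]
          rw [if_pos (by omega)]
          simp [omegaT, hv]
        · have hl : l = j.succ := by simp [Fin.ext_iff, Fin.val_succ]; omega
          rw [hl, Function.update_self]
          simp only [mergeW, Fin.val_succ]
          rw [if_neg (by omega)]
          simp [omegaT]
        · rw [Function.update_of_ne (by simp [Fin.ext_iff, Fin.val_succ]; omega)]
          simp only [mergeW, Fin.val_succ]
          rw [if_neg (by omega), if_neg (by omega)]
          simp only [omegaT, hv]
          rw [if_neg (by omega : ¬ l.1 + 1 = 0), if_neg (by omega : ¬ l.1 = 0)]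
      rw [h0]
      simp only [hmerge, Fin.val_zero, pow_zero, one_smul, neg_one_smul, Fin.val_succ]
      abel
    rw [hL]
    have hsign : ∀ j : Fin k,
        (∑ l : Fin (k+1), if l < j.succ then omegaD k l else 0) = (j.1 : ℤ) := by
      intro j
      rw [Fin.sum_univ_succ]
      have h0 : ((0 : Fin (k+1)) < j.succ) := by
        simp [Fin.lt_def]
      rw [if_pos h0]
      have : ∀ l : Fin k, (if l.succ < j.succ then omegaD k l.succ else 0)
          = (if l.1 < j.1 then (1:ℤ) else 0) := by
        intro l
        have hc : (l.succ < j.succ) ↔ l.1 < j.1 := by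
          rw [Fin.lt_def, Fin.val_succ, Fin.val_succ]
          omega
        rw [if_congr hc rfl rfl]
        simp [omegaD, Fin.val_succ]
      rw [Finset.sum_congr rfl (fun l _ => this l)]
      have h2 : (∑ l : Fin k, if l.1 < j.1 then (1:ℤ) else 0)
          = ∑ i ∈ Finset.range k, (if i ∈ Finset.range j.1 then (1:ℤ) else 0) := by
        rw [Fin.sum_univ_eq_sum_range (fun i => if i < j.1 then (1:ℤ) else 0) k]
        exact Finset.sum_congr rfl (fun i _ => by simp)
      rw [h2, Finset.sum_ite_mem,
        Finset.inter_eq_right.mpr (Finset.range_subset_range.mpr (by omega : j.1 ≤ k))]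
      simp [omegaD]
    -- RHS reduction
    rw [Fin.sum_univ_succ]
    have hz : Function.update v (0 : Fin (k+1)) (nabla (v 0)) =
        Function.update v (0 : Fin (k+1)) 0 := by
      have : v 0 = 1 := by simp [hv, omegaT]
      rw [this, hnabla1]
    rw [hz, MultilinearMap.map_update_zero, smul_zero, zero_add]
    have hvs : ∀ j : Fin k, v j.succ = ω := by
      intro j; simp [hv, omegaT, Fin.succ]
    have hrhs : ∀ j : Fin k,
        negOnePowK K (∑ l : Fin (k+1), if l < j.succ then omegaD k l else 0) •
          (PiTensorProduct.tprod K) (Function.update v j.succ (nabla (v j.succ)))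
        = (-1:K)^j.1 • (PiTensorProduct.tprod K) (Function.update v j.succ (nabla ω)) := by
      intro j
      rw [hsign j, negOnePowK_natCast, hvs j]
    rw [Finset.sum_congr rfl (fun j _ => hrhs j)]
    have hupd : ∀ j : Fin k,
        (⟨j.1+1, by have := j.2; omega⟩ : Fin (k+1)) = j.succ := fun j => rfl
    simp only [hupd]
    rw [smul_add, Finset.smul_sum, Finset.smul_sum, ← Finset.sum_add_distrib]
    refine Finset.sum_congr rfl fun j _ => ?_
    have hsub : Om - Rt - nabla ω = hbarInv • (ω * ω) := by
      rw [← hMC]; abel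
    have hOmeq : (PiTensorProduct.tprod K) (Function.update v j.succ (Om - Rt))
        = (PiTensorProduct.tprod K) (Function.update v j.succ (nabla ω))
          + hbarInv • (PiTensorProduct.tprod K) (Function.update v j.succ (ω * ω)) := by
      have h1 := MultilinearMap.map_update_sub (PiTensorProduct.tprod K) v j.succ
        (Om - Rt) (nabla ω)
      rw [hsub, MultilinearMap.map_update_smul] at h1
      rw [h1]
      abel
    rw [hOmeq]
    have hps : (-1:K)^(j.1+1) = -(-1:K)^j.1 := by rw [pow_succ]; ring
    rw [hps]
    simp only [smul_add, smul_smul]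
    rw [show hbar * (-(-1:K)^j.1 * hbarInv) = -(-1:K)^j.1 from by
        linear_combination (-(-1:K)^j.1) * hunit]
    module
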